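/- Suppose the law of Y is the uniform distribution on the interval [a, b] with a < b, so that F_Y(y) = (y − a)/(b − a) for y ∈ [a, b]. Then for every bounded measurable function g : ℝ^d → ℝ, E[Y·g(X)] = (b/2)·E[g(X⁺)] + (a/2)·E[g(X⁻)]. -/

import Mathlib

open MeasureTheory ProbabilityTheory

lemma aux_integrable_of_bound {α : Type*} [MeasurableSpace α] {m : Measure α}
    [IsFiniteMeasure m] {f : α → ℝ} (hf : AEStronglyMeasurable f m) {M : ℝ}
    (h : ∀ᵐ x ∂m, |f x| ≤ M) : Integrable f m :=
  (integrable_const M).mono' hf (by simpa [Real.norm_eq_abs] using h)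

/-- If the law of `Y` is uniform on `[a, b]` with `a < b`, then for every
bounded measurable `g`, `E[Y g(X)] = (b/2) E[g(X⁺)] + (a/2) E[g(X⁻)]`. -/
theorem stmt_4
    {Ω : Type*} [MeasurableSpace Ω] {μ : Measure Ω} [IsProbabilityMeasure μ]
    {d : ℕ} {X X' : Ω → (Fin d → ℝ)} {Y Y' : Ω → ℝ}
    (hX : Measurable X) (hY : Measurable Y) (hX' : Measurable X') (hY' : Measurable Y')
    (hindep : IndepFun (fun ω => (X ω, Y ω)) (fun ω => (X' ω, Y' ω)) μ)
    (hident : μ.map (fun ω => (X ω, Y ω)) = μ.map (fun ω => (X' ω, Y' ω)))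
    (a b : ℝ) (hab : a < b)
    (hlaw : μ.map Y = (ENNReal.ofReal (b - a))⁻¹ • (volume.restrict (Set.Icc a b)))
    (g : (Fin d → ℝ) → ℝ) (hg : Measurable g)
    (M : ℝ) (hgM : ∀ x, |g x| ≤ M) :
    ∫ ω, Y ω * g (X ω) ∂μ
      = (b / 2) * (∫ ω, g (if Y' ω ≤ Y ω then X ω else X' ω) ∂μ)
        + (a / 2) * ∫ ω, g (if Y' ω ≤ Y ω then X' ω else X ω) ∂μ := by
  have hba : (0:ℝ) < b - a := sub_pos.mpr hab
  have hM : 0 ≤ M := le_trans (abs_nonneg _) (hgM 0)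
  have hXY : Measurable fun ω => (X ω, Y ω) := hX.prodMk hY
  have hXY' : Measurable fun ω => (X' ω, Y' ω) := hX'.prodMk hY'
  set ν : Measure ((Fin d → ℝ) × ℝ) := μ.map (fun ω => (X ω, Y ω)) with hν
  haveI : IsProbabilityMeasure ν := Measure.isProbabilityMeasure_map hXY.aemeasurable
  have hjoint : Measurable fun ω => ((X ω, Y ω), (X' ω, Y' ω)) := hXY.prodMk hXY'
  have hprod : μ.map (fun ω => ((X ω, Y ω), (X' ω, Y' ω))) = ν.prod ν := by
    rw [(indepFun_iff_map_prod_eq_prod_map_map hXY.aemeasurable hXY'.aemeasurable).mp hindep,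
      ← hident]
  -- measure of snd-preimages under ν
  have hval : ∀ s : Set ℝ, MeasurableSet s →
      ν (Prod.snd ⁻¹' s) = (ENNReal.ofReal (b - a))⁻¹ * volume (s ∩ Set.Icc a b) := by
    intro s hs
    rw [hν, Measure.map_apply hXY (measurable_snd hs)]
    have h1 : (fun ω => (X ω, Y ω)) ⁻¹' (Prod.snd ⁻¹' s) = Y ⁻¹' s := rfl
    rw [h1, ← Measure.map_apply hY hs, hlaw, Measure.smul_apply,
      Measure.restrict_apply hs, smul_eq_mul]
  have hvalR : ∀ s : Set ℝ, MeasurableSet s →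
      (ν (Prod.snd ⁻¹' s)).toReal = (volume (s ∩ Set.Icc a b)).toReal / (b - a) := by
    intro s hs
    rw [hval s hs, ENNReal.toReal_mul, ENNReal.toReal_inv, ENNReal.toReal_ofReal hba.le,
      div_eq_mul_inv, mul_comm]
  -- a.e. the second coordinate lies in [a, b]
  have hae : ∀ᵐ p ∂ν, p.2 ∈ Set.Icc a b := by
    have h0 : ν (Prod.snd ⁻¹' (Set.Icc a b)ᶜ) = 0 := by
      rw [hval _ measurableSet_Icc.compl, Set.compl_inter_self, measure_empty, mul_zero]
    exact ae_iff.mpr h0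
  -- the four cdf-type values
  have hIic : ∀ t ∈ Set.Icc a b, (ν (Prod.snd ⁻¹' Set.Iic t)).toReal = (t - a) / (b - a) := by
    intro t ht
    have hset : Set.Iic t ∩ Set.Icc a b = Set.Icc a t := by
      ext x
      simp only [Set.mem_inter_iff, Set.mem_Iic, Set.mem_Icc]
      exact ⟨fun h => ⟨h.2.1, h.1⟩, fun h => ⟨h.2, h.1, h.2.trans ht.2⟩⟩
    rw [hvalR _ measurableSet_Iic, hset, Real.volume_Icc,
      ENNReal.toReal_ofReal (by linarith [ht.1])]
  have hIio : ∀ t ∈ Set.Icc a b, (ν (Prod.snd ⁻¹' Set.Iio t)).toReal = (t - a) / (b - a) := by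
    intro t ht
    have hset : Set.Iio t ∩ Set.Icc a b = Set.Ico a t := by
      ext x
      simp only [Set.mem_inter_iff, Set.mem_Iio, Set.mem_Icc, Set.mem_Ico]
      exact ⟨fun h => ⟨h.2.1, h.1⟩, fun h => ⟨h.2, h.1, h.2.le.trans ht.2⟩⟩
    rw [hvalR _ measurableSet_Iio, hset, Real.volume_Ico,
      ENNReal.toReal_ofReal (by linarith [ht.1])]
  have hIci : ∀ t ∈ Set.Icc a b, (ν (Prod.snd ⁻¹' Set.Ici t)).toReal = (b - t) / (b - a) := by
    intro t ht
    have hset : Set.Ici t ∩ Set.Icc a b = Set.Icc t b := by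
      ext x
      simp only [Set.mem_inter_iff, Set.mem_Ici, Set.mem_Icc]
      exact ⟨fun h => ⟨h.1, h.2.2⟩, fun h => ⟨h.1, ht.1.trans h.1, h.2⟩⟩
    rw [hvalR _ measurableSet_Ici, hset, Real.volume_Icc,
      ENNReal.toReal_ofReal (by linarith [ht.2])]
  have hIoi : ∀ t ∈ Set.Icc a b, (ν (Prod.snd ⁻¹' Set.Ioi t)).toReal = (b - t) / (b - a) := by
    intro t ht
    have hset : Set.Ioi t ∩ Set.Icc a b = Set.Ioc t b := by
      ext x
      simp only [Set.mem_inter_iff, Set.mem_Ioi, Set.mem_Icc, Set.mem_Ioc]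
      exact ⟨fun h => ⟨h.1, h.2.2⟩, fun h => ⟨h.1, (ht.1.trans h.1.le), h.2⟩⟩
    rw [hvalR _ measurableSet_Ioi, hset, Real.volume_Ioc,
      ENNReal.toReal_ofReal (by linarith [ht.2])]
  -- abbreviations
  set A : ℝ := ∫ p : (Fin d → ℝ) × ℝ, ((p.2 - a) / (b - a)) * g p.1 ∂ν with hA
  set B : ℝ := ∫ p : (Fin d → ℝ) × ℝ, ((b - p.2) / (b - a)) * g p.1 ∂ν with hB
  -- integrabilities of the four pieces on the product
  have hsetle : MeasurableSet {pq : ((Fin d → ℝ) × ℝ) × ((Fin d → ℝ) × ℝ) | pq.2.2 ≤ pq.1.2} :=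
    measurableSet_le measurable_snd.snd measurable_fst.snd
  have int1 : Integrable
      (fun pq : ((Fin d → ℝ) × ℝ) × ((Fin d → ℝ) × ℝ) =>
        if pq.2.2 ≤ pq.1.2 then g pq.1.1 else 0) (ν.prod ν) := by
    refine aux_integrable_of_bound
      ((Measurable.ite hsetle (hg.comp measurable_fst.fst) measurable_const).aestronglyMeasurable) (M := M)
      (Filter.Eventually.of_forall fun pq => ?_)
    by_cases h : pq.2.2 ≤ pq.1.2 <;> simp [h, hgM, hM]
  have int2 : Integrable
      (fun pq : ((Fin d → ℝ) × ℝ) × ((Fin d → ℝ) × ℝ) =>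
        if pq.2.2 ≤ pq.1.2 then 0 else g pq.2.1) (ν.prod ν) := by
    refine aux_integrable_of_bound
      ((Measurable.ite hsetle measurable_const (hg.comp measurable_snd.fst)).aestronglyMeasurable) (M := M)
      (Filter.Eventually.of_forall fun pq => ?_)
    by_cases h : pq.2.2 ≤ pq.1.2 <;> simp [h, hgM, hM]
  have int3 : Integrable
      (fun pq : ((Fin d → ℝ) × ℝ) × ((Fin d → ℝ) × ℝ) =>
        if pq.2.2 ≤ pq.1.2 then g pq.2.1 else 0) (ν.prod ν) := by
    refine aux_integrable_of_bound
      ((Measurable.ite hsetle (hg.comp measurable_snd.fst) measurable_const).aestronglyMeasurable) (M := M)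
      (Filter.Eventually.of_forall fun pq => ?_)
    by_cases h : pq.2.2 ≤ pq.1.2 <;> simp [h, hgM, hM]
  have int4 : Integrable
      (fun pq : ((Fin d → ℝ) × ℝ) × ((Fin d → ℝ) × ℝ) =>
        if pq.2.2 ≤ pq.1.2 then 0 else g pq.1.1) (ν.prod ν) := by
    refine aux_integrable_of_bound
      ((Measurable.ite hsetle measurable_const (hg.comp measurable_fst.fst)).aestronglyMeasurable) (M := M)
      (Filter.Eventually.of_forall fun pq => ?_)
    by_cases h : pq.2.2 ≤ pq.1.2 <;> simp [h, hgM, hM]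
  -- the four Fubini computations
  have hΦ1 : ∫ pq : ((Fin d → ℝ) × ℝ) × ((Fin d → ℝ) × ℝ),
      (if pq.2.2 ≤ pq.1.2 then g pq.1.1 else 0) ∂(ν.prod ν) = A := by
    rw [integral_prod _ int1, hA]
    refine integral_congr_ae ?_
    filter_upwards [hae] with p hp
    have h1 : (fun q : (Fin d → ℝ) × ℝ => if q.2 ≤ p.2 then g p.1 else 0)
        = (Prod.snd ⁻¹' Set.Iic p.2).indicator (fun _ => g p.1) := by
      ext q; by_cases h : q.2 ≤ p.2 <;> simp [h]
    rw [h1, integral_indicator_const _ (measurable_snd measurableSet_Iic), measureReal_def, hIic p.2 hp,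
      smul_eq_mul]
  have hΦ2 : ∫ pq : ((Fin d → ℝ) × ℝ) × ((Fin d → ℝ) × ℝ),
      (if pq.2.2 ≤ pq.1.2 then 0 else g pq.2.1) ∂(ν.prod ν) = A := by
    rw [integral_prod_symm _ int2, hA]
    refine integral_congr_ae ?_
    filter_upwards [hae] with q hq
    have h1 : (fun p : (Fin d → ℝ) × ℝ => if q.2 ≤ p.2 then 0 else g q.1)
        = (Prod.snd ⁻¹' Set.Iio q.2).indicator (fun _ => g q.1) := by
      ext p
      by_cases h : q.2 ≤ p.2
      · simp [h, not_lt.mpr h]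
      · simp [h, lt_of_not_ge h]
    rw [h1, integral_indicator_const _ (measurable_snd measurableSet_Iio), measureReal_def, hIio q.2 hq,
      smul_eq_mul]
  have hΨ1 : ∫ pq : ((Fin d → ℝ) × ℝ) × ((Fin d → ℝ) × ℝ),
      (if pq.2.2 ≤ pq.1.2 then g pq.2.1 else 0) ∂(ν.prod ν) = B := by
    rw [integral_prod_symm _ int3, hB]
    refine integral_congr_ae ?_
    filter_upwards [hae] with q hq
    have h1 : (fun p : (Fin d → ℝ) × ℝ => if q.2 ≤ p.2 then g q.1 else 0)
        = (Prod.snd ⁻¹' Set.Ici q.2).indicator (fun _ => g q.1) := by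
      ext p; by_cases h : q.2 ≤ p.2 <;> simp [h]
    rw [h1, integral_indicator_const _ (measurable_snd measurableSet_Ici), measureReal_def, hIci q.2 hq,
      smul_eq_mul]
  have hΨ2 : ∫ pq : ((Fin d → ℝ) × ℝ) × ((Fin d → ℝ) × ℝ),
      (if pq.2.2 ≤ pq.1.2 then 0 else g pq.1.1) ∂(ν.prod ν) = B := by
    rw [integral_prod _ int4, hB]
    refine integral_congr_ae ?_
    filter_upwards [hae] with p hp
    have h1 : (fun q : (Fin d → ℝ) × ℝ => if q.2 ≤ p.2 then 0 else g p.1)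
        = (Prod.snd ⁻¹' Set.Ioi p.2).indicator (fun _ => g p.1) := by
      ext q
      by_cases h : q.2 ≤ p.2
      · simp [h, not_lt.mpr h]
      · simp [h, lt_of_not_ge h]
    rw [h1, integral_indicator_const _ (measurable_snd measurableSet_Ioi), measureReal_def, hIoi p.2 hp,
      smul_eq_mul]
  -- E[g(X⁺)] = 2A
  have hplus : ∫ ω, g (if Y' ω ≤ Y ω then X ω else X' ω) ∂μ = A + A := by
    have hmeasΦ : Measurable (fun pq : ((Fin d → ℝ) × ℝ) × ((Fin d → ℝ) × ℝ) =>
        if pq.2.2 ≤ pq.1.2 then g pq.1.1 else g pq.2.1) :=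
      Measurable.ite hsetle (hg.comp measurable_fst.fst) (hg.comp measurable_snd.fst)
    have heq : ∀ ω, g (if Y' ω ≤ Y ω then X ω else X' ω)
        = (fun pq : ((Fin d → ℝ) × ℝ) × ((Fin d → ℝ) × ℝ) =>
            if pq.2.2 ≤ pq.1.2 then g pq.1.1 else g pq.2.1)
          ((X ω, Y ω), (X' ω, Y' ω)) := by
      intro ω; by_cases h : Y' ω ≤ Y ω <;> simp [h]
    calc ∫ ω, g (if Y' ω ≤ Y ω then X ω else X' ω) ∂μ
        = ∫ ω, (fun pq : ((Fin d → ℝ) × ℝ) × ((Fin d → ℝ) × ℝ) =>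
            if pq.2.2 ≤ pq.1.2 then g pq.1.1 else g pq.2.1)
            ((X ω, Y ω), (X' ω, Y' ω)) ∂μ := by
          exact integral_congr_ae (Filter.Eventually.of_forall heq)
      _ = ∫ pq, (if pq.2.2 ≤ pq.1.2 then g pq.1.1 else g pq.2.1) ∂(ν.prod ν) := by
          rw [← hprod,
            integral_map hjoint.aemeasurable hmeasΦ.aestronglyMeasurable]
      _ = A + A := by
          rw [show (fun pq : ((Fin d → ℝ) × ℝ) × ((Fin d → ℝ) × ℝ) =>
              if pq.2.2 ≤ pq.1.2 then g pq.1.1 else g pq.2.1)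
              = fun pq => (if pq.2.2 ≤ pq.1.2 then g pq.1.1 else 0)
                + (if pq.2.2 ≤ pq.1.2 then 0 else g pq.2.1) from
            funext fun pq => by by_cases h : pq.2.2 ≤ pq.1.2 <;> simp [h],
            integral_add int1 int2, hΦ1, hΦ2]
  -- E[g(X⁻)] = 2B
  have hminus : ∫ ω, g (if Y' ω ≤ Y ω then X' ω else X ω) ∂μ = B + B := by
    have hmeasΦ : Measurable (fun pq : ((Fin d → ℝ) × ℝ) × ((Fin d → ℝ) × ℝ) =>
        if pq.2.2 ≤ pq.1.2 then g pq.2.1 else g pq.1.1) :=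
      Measurable.ite hsetle (hg.comp measurable_snd.fst) (hg.comp measurable_fst.fst)
    have heq : ∀ ω, g (if Y' ω ≤ Y ω then X' ω else X ω)
        = (fun pq : ((Fin d → ℝ) × ℝ) × ((Fin d → ℝ) × ℝ) =>
            if pq.2.2 ≤ pq.1.2 then g pq.2.1 else g pq.1.1)
          ((X ω, Y ω), (X' ω, Y' ω)) := by
      intro ω; by_cases h : Y' ω ≤ Y ω <;> simp [h]
    calc ∫ ω, g (if Y' ω ≤ Y ω then X' ω else X ω) ∂μ
        = ∫ ω, (fun pq : ((Fin d → ℝ) × ℝ) × ((Fin d → ℝ) × ℝ) =>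
            if pq.2.2 ≤ pq.1.2 then g pq.2.1 else g pq.1.1)
            ((X ω, Y ω), (X' ω, Y' ω)) ∂μ := by
          exact integral_congr_ae (Filter.Eventually.of_forall heq)
      _ = ∫ pq, (if pq.2.2 ≤ pq.1.2 then g pq.2.1 else g pq.1.1) ∂(ν.prod ν) := by
          rw [← hprod,
            integral_map hjoint.aemeasurable hmeasΦ.aestronglyMeasurable]
      _ = B + B := by
          rw [show (fun pq : ((Fin d → ℝ) × ℝ) × ((Fin d → ℝ) × ℝ) =>
              if pq.2.2 ≤ pq.1.2 then g pq.2.1 else g pq.1.1)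
              = fun pq => (if pq.2.2 ≤ pq.1.2 then g pq.2.1 else 0)
                + (if pq.2.2 ≤ pq.1.2 then 0 else g pq.1.1) from
            funext fun pq => by by_cases h : pq.2.2 ≤ pq.1.2 <;> simp [h],
            integral_add int3 int4, hΨ1, hΨ2]
  -- integrabilities of the A and B integrands
  have intA : Integrable (fun p : (Fin d → ℝ) × ℝ => ((p.2 - a) / (b - a)) * g p.1) ν := by
    refine aux_integrable_of_bound
      (((measurable_snd.sub measurable_const).div_const _ |>.mul
        (hg.comp measurable_fst)).aestronglyMeasurable) (M := M) ?_
    filter_upwards [hae] with p hp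
    have h1 : 0 ≤ (p.2 - a) / (b - a) := div_nonneg (by linarith [hp.1]) hba.le
    have h2 : (p.2 - a) / (b - a) ≤ 1 := (div_le_one hba).mpr (by linarith [hp.2])
    rw [abs_mul, abs_of_nonneg h1]
    calc (p.2 - a) / (b - a) * |g p.1| ≤ 1 * M :=
          mul_le_mul h2 (hgM _) (abs_nonneg _) zero_le_one
      _ = M := one_mul M
  have intB : Integrable (fun p : (Fin d → ℝ) × ℝ => ((b - p.2) / (b - a)) * g p.1) ν := by
    refine aux_integrable_of_bound
      (((measurable_const.sub measurable_snd).div_const _ |>.mul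
        (hg.comp measurable_fst)).aestronglyMeasurable) (M := M) ?_
    filter_upwards [hae] with p hp
    have h1 : 0 ≤ (b - p.2) / (b - a) := div_nonneg (by linarith [hp.2]) hba.le
    have h2 : (b - p.2) / (b - a) ≤ 1 := (div_le_one hba).mpr (by linarith [hp.1])
    rw [abs_mul, abs_of_nonneg h1]
    calc (b - p.2) / (b - a) * |g p.1| ≤ 1 * M :=
          mul_le_mul h2 (hgM _) (abs_nonneg _) zero_le_one
      _ = M := one_mul M
  -- the left-hand side
  have hYg : ∫ ω, Y ω * g (X ω) ∂μ = ∫ p : (Fin d → ℝ) × ℝ, p.2 * g p.1 ∂ν := by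
    rw [hν, integral_map (f := fun p : (Fin d → ℝ) × ℝ => p.2 * g p.1) hXY.aemeasurable
      (((measurable_snd.mul (hg.comp measurable_fst))).aestronglyMeasurable)]
  have hfin : ∫ p : (Fin d → ℝ) × ℝ, p.2 * g p.1 ∂ν = b * A + a * B := by
    rw [show (fun p : (Fin d → ℝ) × ℝ => p.2 * g p.1)
        = fun p => b * (((p.2 - a) / (b - a)) * g p.1)
          + a * (((b - p.2) / (b - a)) * g p.1) from
      funext fun p => by field_simp; ring,
      integral_add (intA.const_mul b) (intB.const_mul a), integral_const_mul,
      integral_const_mul, hA, hB]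
  rw [hYg, hfin, hplus, hminus]; ring
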